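/- For every integer n ≥ 1, the number of symplectic Dellac configurations of size 2n satisfies #SpDC_{2n} = Σ_{T ∈ Tab_n} 2^{fr(T)}, the sum ranging over all tableaux T in Tab_n. -/

import Mathlib

/-- A Dellac configuration of size `m`. -/
def IsDellac (m : ℕ) (D : Finset (ℕ × ℕ)) : Prop :=
  (∀ d ∈ D, 1 ≤ d.1 ∧ d.1 ≤ m ∧ 1 ≤ d.2 ∧ d.2 ≤ 2 * m) ∧
  (∀ i, 1 ≤ i → i ≤ 2 * m → (D.filter (fun d => d.2 = i)).card = 1) ∧
  (∀ j, 1 ≤ j → j ≤ m → (D.filter (fun d => d.1 = j)).card = 2) ∧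
  (∀ d ∈ D, d.1 ≤ d.2 ∧ d.2 ≤ d.1 + m)

/-- A symplectic Dellac configuration of size `2n`. -/
def IsSpDC (n : ℕ) (S : Finset (ℕ × ℕ)) : Prop :=
  IsDellac (2 * n) S ∧
  ∀ j i, 1 ≤ j → j ≤ 2 * n → 1 ≤ i → i ≤ 4 * n →
    ((j, i) ∈ S ↔ (2 * n + 1 - j, 4 * n + 1 - i) ∈ S)

/-- The set of symplectic Dellac configurations of size `2n`. -/
def SpDC (n : ℕ) : Set (Finset (ℕ × ℕ)) := {S | IsSpDC n S}

/-- A tableau in `Tab_n`: `2n` dots `(j, p)` with `j ∈ [1, n]`, `p ∈ [1, 2n]`,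
each row containing exactly one dot, each column exactly two dots, and each dot
satisfying `j ≤ p`. -/
def IsTab (n : ℕ) (T : Finset (ℕ × ℕ)) : Prop :=
  (∀ d ∈ T, 1 ≤ d.1 ∧ d.1 ≤ n ∧ 1 ≤ d.2 ∧ d.2 ≤ 2 * n) ∧
  (∀ i, 1 ≤ i → i ≤ 2 * n → (T.filter (fun d => d.2 = i)).card = 1) ∧
  (∀ j, 1 ≤ j → j ≤ n → (T.filter (fun d => d.1 = j)).card = 2) ∧
  (∀ d ∈ T, d.1 ≤ d.2)

/-- The set `Tab_n`. -/
def Tab (n : ℕ) : Set (Finset (ℕ × ℕ)) := {T | IsTab n T}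

/-- The number of free dots of `T`, i.e. dots `(j, p)` with `p ≥ 2n + 1 - j`. -/
def fr (n : ℕ) (T : Finset (ℕ × ℕ)) : ℕ :=
  (T.filter (fun d => 2 * n + 1 ≤ d.1 + d.2)).card

/- ===================== auxiliary development ===================== -/

open Finset
open scoped Classical

namespace SpDCAux

/-- mirror map -/
def mir (n : ℕ) (d : ℕ × ℕ) : ℕ × ℕ := (2 * n + 1 - d.1, 4 * n + 1 - d.2)

/-- projection of a column to its column pair representative -/
def lowCol (n : ℕ) (d : ℕ × ℕ) : ℕ × ℕ := (min d.1 (2 * n + 1 - d.1), d.2)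

/-- half configurations -/
def IsHalf (n : ℕ) (H : Finset (ℕ × ℕ)) : Prop :=
  (∀ d ∈ H, 1 ≤ d.1 ∧ d.1 ≤ 2 * n ∧ 1 ≤ d.2 ∧ d.2 ≤ 2 * n ∧ d.1 ≤ d.2) ∧
  (∀ i, 1 ≤ i → i ≤ 2 * n → (H.filter (fun d => d.2 = i)).card = 1) ∧
  (∀ j, 1 ≤ j → j ≤ n →
    (H.filter (fun d => d.1 = j)).card + (H.filter (fun d => d.1 = 2 * n + 1 - j)).card = 2)

noncomputable def sFin (n : ℕ) : Finset (Finset (ℕ × ℕ)) :=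
  ((Icc 1 (2 * n) ×ˢ Icc 1 (4 * n)).powerset).filter (fun S => IsSpDC n S)

noncomputable def hFin (n : ℕ) : Finset (Finset (ℕ × ℕ)) :=
  ((Icc 1 (2 * n) ×ˢ Icc 1 (2 * n)).powerset).filter (fun H => IsHalf n H)

noncomputable def tFin (n : ℕ) : Finset (Finset (ℕ × ℕ)) :=
  ((Icc 1 n ×ˢ Icc 1 (2 * n)).powerset).filter (fun T => IsTab n T)

def toTab (n : ℕ) (H : Finset (ℕ × ℕ)) : Finset (ℕ × ℕ) := H.image (lowCol n)

lemma mem_sFin {n : ℕ} {S : Finset (ℕ × ℕ)} : S ∈ sFin n ↔ IsSpDC n S := by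
  simp only [sFin, mem_filter, mem_powerset, and_iff_right_iff_imp]
  intro hS d hd
  obtain ⟨h1, h2, h3, h4⟩ := hS.1.1 d hd
  simp [mem_product, mem_Icc]; omega

lemma mem_hFin {n : ℕ} {H : Finset (ℕ × ℕ)} : H ∈ hFin n ↔ IsHalf n H := by
  simp only [hFin, mem_filter, mem_powerset, and_iff_right_iff_imp]
  intro hH d hd
  obtain ⟨h1, h2, h3, h4, h5⟩ := hH.1 d hd
  simp [mem_product, mem_Icc]; omega

lemma mem_tFin {n : ℕ} {T : Finset (ℕ × ℕ)} : T ∈ tFin n ↔ IsTab n T := by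
  simp only [tFin, mem_filter, mem_powerset, and_iff_right_iff_imp]
  intro hT d hd
  obtain ⟨h1, h2, h3, h4⟩ := hT.1 d hd
  simp [mem_product, mem_Icc]; omega

lemma filter_one_unique {α : Type*} {s : Finset α} {p : α → Prop} [DecidablePred p]
    (h : (s.filter p).card = 1) {a b : α} (ha : a ∈ s) (hpa : p a)
    (hb : b ∈ s) (hpb : p b) : a = b := by
  obtain ⟨c, hc⟩ := Finset.card_eq_one.mp h
  have h1 : a ∈ s.filter p := mem_filter.2 ⟨ha, hpa⟩
  have h2 : b ∈ s.filter p := mem_filter.2 ⟨hb, hpb⟩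
  rw [hc, mem_singleton] at h1 h2
  rw [h1, h2]

lemma filter_one_exists {α : Type*} {s : Finset α} {p : α → Prop} [DecidablePred p]
    (h : (s.filter p).card = 1) : ∃ a ∈ s, p a := by
  obtain ⟨c, hc⟩ := Finset.card_eq_one.mp h
  have : c ∈ s.filter p := by rw [hc]; exact mem_singleton_self c
  exact ⟨c, (mem_filter.1 this).1, (mem_filter.1 this).2⟩

/-- a set with exactly one dot in each of `N` rows has `N` elements -/
lemma card_of_rows {N : ℕ} {H : Finset (ℕ × ℕ)}
    (hb : ∀ d ∈ H, 1 ≤ d.2 ∧ d.2 ≤ N)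
    (hr : ∀ i, 1 ≤ i → i ≤ N → (H.filter (fun d => d.2 = i)).card = 1) :
    H.card = N := by
  calc H.card = ∑ i ∈ Icc 1 N, (H.filter (fun d => d.2 = i)).card := by
        refine Finset.card_eq_sum_card_fiberwise (s := H) (t := Icc 1 N) (f := fun d : ℕ × ℕ => d.2) ?_
        intro x hx; rw [Finset.mem_coe, mem_Icc]; exact hb x hx
    _ = ∑ _i ∈ Icc 1 N, 1 :=
        Finset.sum_congr rfl (fun i hi => hr i (mem_Icc.1 hi).1 (mem_Icc.1 hi).2)
    _ = N := by simp


/- ===== Part A : SpDC ↔ Half ===== -/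

lemma mir_mir {n : ℕ} {d : ℕ × ℕ} (h1 : d.1 ≤ 2 * n + 1) (h2 : d.2 ≤ 4 * n + 1) :
    mir n (mir n d) = d := by
  simp only [mir, Prod.ext_iff]
  constructor <;> omega

lemma spdc_mem_mir {n : ℕ} {S : Finset (ℕ × ℕ)} (hS : IsSpDC n S) {d : ℕ × ℕ}
    (hd : d ∈ S) : mir n d ∈ S := by
  obtain ⟨b1, b2, b3, b4⟩ := hS.1.1 d hd
  have := (hS.2 d.1 d.2 b1 b2 b3 (by omega)).1
  exact this (by rwa [Prod.mk.eta])

lemma half_of_spdc {n : ℕ} {S : Finset (ℕ × ℕ)} (hS : IsSpDC n S) :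
    IsHalf n (S.filter (fun d => d.2 ≤ 2 * n)) := by
  obtain ⟨⟨hb, hrow, hcol, hdia⟩, hsym⟩ := hS
  refine ⟨?_, ?_, ?_⟩
  · intro d hd
    rw [mem_filter] at hd
    obtain ⟨b1, b2, b3, b4⟩ := hb d hd.1
    obtain ⟨c1, c2⟩ := hdia d hd.1
    exact ⟨b1, b2, b3, hd.2, c1⟩
  · intro i hi1 hi2
    rw [filter_filter]
    rw [filter_congr (q := fun d => d.2 = i) (fun d _ => by constructor <;> (intro h; omega))]
    exact hrow i hi1 (by omega)
  · intro j hj1 hj2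
    have hS' : IsSpDC n S := ⟨⟨hb, hrow, hcol, hdia⟩, hsym⟩
    have e1 : (S.filter (fun d => d.2 ≤ 2 * n)).filter (fun d => d.1 = j)
        = (S.filter (fun d => d.1 = j)).filter (fun d => d.2 ≤ 2 * n) := by
      rw [filter_filter, filter_filter]
      exact filter_congr (fun d _ => by tauto)
    have e2 : (S.filter (fun d => d.2 ≤ 2 * n)).filter (fun d => d.1 = 2 * n + 1 - j)
        = (S.filter (fun d => d.1 = 2 * n + 1 - j)).filter (fun d => d.2 ≤ 2 * n) := by
      rw [filter_filter, filter_filter]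
      exact filter_congr (fun d _ => by tauto)
    have key : ((S.filter (fun d => d.1 = j)).filter (fun d => ¬ d.2 ≤ 2 * n)).card
        = ((S.filter (fun d => d.1 = 2 * n + 1 - j)).filter (fun d => d.2 ≤ 2 * n)).card := by
      apply card_nbij (i := mir n)
      · intro a ha
        simp only [Finset.mem_coe, mem_filter] at ha ⊢
        obtain ⟨⟨haS, ha1⟩, ha2⟩ := ha
        obtain ⟨b1, b2, b3, b4⟩ := hb a haS
        exact ⟨⟨spdc_mem_mir hS' haS, by simp only [mir]; omega⟩, by simp only [mir]; omega⟩
      · intro a ha b hb' hab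
        simp only [Finset.mem_coe, mem_filter] at ha hb'
        obtain ⟨b1, b2, b3, b4⟩ := hb a ha.1.1
        obtain ⟨c1, c2, c3, c4⟩ := hb b hb'.1.1
        simp only [mir, Prod.ext_iff] at hab
        exact Prod.ext (by omega) (by omega)
      · intro e he
        simp only [Finset.mem_coe, mem_filter] at he
        obtain ⟨⟨heS, he1⟩, he2⟩ := he
        obtain ⟨b1, b2, b3, b4⟩ := hb e heS
        refine ⟨mir n e, ?_, mir_mir (by omega) (by omega)⟩
        simp only [Finset.mem_coe, mem_filter]
        exact ⟨⟨spdc_mem_mir hS' heS, by simp only [mir]; omega⟩, by simp only [mir]; omega⟩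
    have split := card_filter_add_card_filter_not
      (s := S.filter (fun d => d.1 = j)) (p := fun d => d.2 ≤ 2 * n)
    have h2 : (S.filter (fun d => d.1 = j)).card = 2 := hcol j hj1 (by omega)
    rw [h2] at split
    rw [e1, e2, ← key]
    exact split

lemma spdc_decomp {n : ℕ} {S : Finset (ℕ × ℕ)} (hS : IsSpDC n S) :
    S = (S.filter (fun d => d.2 ≤ 2 * n)) ∪
        (S.filter (fun d => d.2 ≤ 2 * n)).image (mir n) := by
  ext d
  simp only [mem_union, mem_filter, mem_image]
  constructor
  · intro hd
    by_cases hbd : d.2 ≤ 2 * n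
    · exact Or.inl ⟨hd, hbd⟩
    · right
      obtain ⟨b1, b2, b3, b4⟩ := hS.1.1 d hd
      refine ⟨mir n d, ⟨spdc_mem_mir hS hd, by simp only [mir]; omega⟩,
        mir_mir (by omega) (by omega)⟩
  · rintro (⟨hd, _⟩ | ⟨e, ⟨he, _⟩, rfl⟩)
    · exact hd
    · exact spdc_mem_mir hS he

lemma half_union_filter {n : ℕ} {H : Finset (ℕ × ℕ)} (hH : IsHalf n H) :
    (H ∪ H.image (mir n)).filter (fun d => d.2 ≤ 2 * n) = H := by
  ext d
  simp only [mem_filter, mem_union, mem_image]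
  constructor
  · rintro ⟨hd | ⟨e, he, rfl⟩, hbd⟩
    · exact hd
    · obtain ⟨b1, b2, b3, b4, b5⟩ := hH.1 e he
      exfalso
      simp only [mir] at hbd
      omega
  · intro hd
    obtain ⟨b1, b2, b3, b4, b5⟩ := hH.1 d hd
    exact ⟨Or.inl hd, b4⟩

lemma spdc_of_half {n : ℕ} {H : Finset (ℕ × ℕ)} (hH : IsHalf n H) :
    IsSpDC n (H ∪ H.image (mir n)) := by
  obtain ⟨hb, hrow, hpair⟩ := hH
  have hmirinj : Set.InjOn (mir n) H := by
    intro a ha b hb' hab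
    obtain ⟨a1, a2, a3, a4, a5⟩ := hb a ha
    obtain ⟨c1, c2, c3, c4, c5⟩ := hb b hb'
    simp only [mir, Prod.ext_iff] at hab
    exact Prod.ext (by omega) (by omega)
  have hinj2 : ∀ s : Finset (ℕ × ℕ), s ⊆ H → Set.InjOn (mir n) s :=
    fun s hs => hmirinj.mono (Finset.coe_subset.2 hs)
  have hdisj0 : Disjoint H (H.image (mir n)) := by
    rw [Finset.disjoint_left]
    intro a ha ha'
    rw [mem_image] at ha'
    obtain ⟨e, he, hea⟩ := ha'
    obtain ⟨a1, a2, a3, a4, a5⟩ := hb a ha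
    obtain ⟨c1, c2, c3, c4, c5⟩ := hb e he
    subst hea
    simp only [mir] at a4
    omega
  have hfwd : ∀ d ∈ H ∪ H.image (mir n), mir n d ∈ H ∪ H.image (mir n) := by
    intro d hd
    rw [mem_union, mem_image] at hd ⊢
    rcases hd with hd | ⟨e, he, rfl⟩
    · exact Or.inr ⟨d, hd, rfl⟩
    · obtain ⟨c1, c2, c3, c4, c5⟩ := hb e he
      exact Or.inl (by rw [mir_mir (by omega) (by omega)]; exact he)
  constructor
  · refine ⟨?_, ?_, ?_, ?_⟩
    · intro d hd
      rw [mem_union, mem_image] at hd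
      rcases hd with hd | ⟨e, he, rfl⟩
      · obtain ⟨a1, a2, a3, a4, a5⟩ := hb d hd
        refine ⟨a1, by omega, a3, by omega⟩
      · obtain ⟨c1, c2, c3, c4, c5⟩ := hb e he
        simp only [mir]
        refine ⟨by omega, by omega, by omega, by omega⟩
    · intro i hi1 hi2
      rw [filter_union, card_union_of_disjoint (disjoint_filter_filter hdisj0)]
      by_cases hc : i ≤ 2 * n
      · have himg : (H.image (mir n)).filter (fun d => d.2 = i) = ∅ := by
          rw [filter_eq_empty_iff]
          intro x hx
          rw [mem_image] at hx
          obtain ⟨e, he, rfl⟩ := hx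
          obtain ⟨c1, c2, c3, c4, c5⟩ := hb e he
          simp only [mir]
          omega
        rw [himg]
        simp only [card_empty, add_zero]
        exact hrow i hi1 hc
      · have hH0 : H.filter (fun d => d.2 = i) = ∅ := by
          rw [filter_eq_empty_iff]
          intro x hx
          obtain ⟨c1, c2, c3, c4, c5⟩ := hb x hx
          omega
        have e4 : H.filter (fun a => (mir n a).2 = i) = H.filter (fun d => d.2 = 4 * n + 1 - i) := by
          apply filter_congr
          intro d hd
          obtain ⟨c1, c2, c3, c4, c5⟩ := hb d hd
          simp only [mir]
          constructor <;> (intro h; omega)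
        rw [hH0, filter_image, e4, card_empty,
          card_image_of_injOn (hinj2 _ (filter_subset _ _)), Nat.zero_add]
        exact hrow (4 * n + 1 - i) (by omega) (by omega)
    · intro j hj1 hj2
      rw [filter_union, card_union_of_disjoint (disjoint_filter_filter hdisj0)]
      have e3 : H.filter (fun a => (mir n a).1 = j) = H.filter (fun d => d.1 = 2 * n + 1 - j) := by
        apply filter_congr
        intro d hd
        obtain ⟨c1, c2, c3, c4, c5⟩ := hb d hd
        simp only [mir]
        constructor <;> (intro h; omega)
      rw [filter_image, e3, card_image_of_injOn (hinj2 _ (filter_subset _ _))]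
      by_cases hc : j ≤ n
      · exact hpair j hj1 hc
      · have := hpair (2 * n + 1 - j) (by omega) (by omega)
        have hjj : 2 * n + 1 - (2 * n + 1 - j) = j := by omega
        rw [hjj] at this
        omega
    · intro d hd
      rw [mem_union, mem_image] at hd
      rcases hd with hd | ⟨e, he, rfl⟩
      · obtain ⟨a1, a2, a3, a4, a5⟩ := hb d hd
        constructor <;> omega
      · obtain ⟨c1, c2, c3, c4, c5⟩ := hb e he
        simp only [mir]
        constructor <;> omega
  · intro j i hj1 hj2 hi1 hi2
    constructor
    · intro h
      exact hfwd (j, i) h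
    · intro h
      have := hfwd _ h
      rw [show mir n (2 * n + 1 - j, 4 * n + 1 - i) = (j, i) from
        by simp only [mir, Prod.ext_iff]; constructor <;> omega] at this
      exact this

lemma card_sFin_eq_hFin (n : ℕ) : (sFin n).card = (hFin n).card := by
  apply card_nbij (i := fun S => S.filter (fun d => d.2 ≤ 2 * n))
  · intro S hS
    exact mem_hFin.2 (half_of_spdc (mem_sFin.1 hS))
  · intro a ha b hb hab
    simp only [Finset.mem_coe] at ha hb
    have ha' := spdc_decomp (mem_sFin.1 ha)
    have hb' := spdc_decomp (mem_sFin.1 hb)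
    simp only at hab
    rw [ha', hb', hab]
  · intro H hH
    simp only [Finset.mem_coe] at hH
    have hH' := mem_hFin.1 hH
    refine ⟨H ∪ H.image (mir n), ?_, half_union_filter hH'⟩
    simp only [Finset.mem_coe]
    exact mem_sFin.2 (spdc_of_half hH')


/- ===== Part B : Half → Tab fibration ===== -/

lemma filter_row_image {f : ℕ × ℕ → ℕ × ℕ} (hf : ∀ d, (f d).2 = d.2)
    (s : Finset (ℕ × ℕ)) (i : ℕ) :
    (s.image f).filter (fun d => d.2 = i) = (s.filter (fun d => d.2 = i)).image f := by
  rw [filter_image]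
  congr 1
  apply filter_congr
  intro d _
  rw [hf]

lemma injOn_of_row {N : ℕ} {f : ℕ × ℕ → ℕ × ℕ} (hf : ∀ d, (f d).2 = d.2)
    {s : Finset (ℕ × ℕ)} (hbs : ∀ d ∈ s, 1 ≤ d.2 ∧ d.2 ≤ N)
    (hr : ∀ i, 1 ≤ i → i ≤ N → (s.filter (fun d => d.2 = i)).card = 1) :
    Set.InjOn f s := by
  intro a ha b hb hab
  simp only [Finset.mem_coe] at ha hb
  have h2 : a.2 = b.2 := by rw [← hf a, ← hf b, hab]
  exact filter_one_unique (hr a.2 (hbs a ha).1 (hbs a ha).2) ha rfl hb h2.symm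

lemma tab_of_half {n : ℕ} {H : Finset (ℕ × ℕ)} (hH : IsHalf n H) :
    IsTab n (toTab n H) := by
  obtain ⟨hb, hrow, hpair⟩ := hH
  have hlsnd : ∀ d : ℕ × ℕ, (lowCol n d).2 = d.2 := fun d => rfl
  have hinjH : Set.InjOn (lowCol n) H :=
    injOn_of_row hlsnd (fun d hd => ⟨(hb d hd).2.2.1, (hb d hd).2.2.2.1⟩) hrow
  refine ⟨?_, ?_, ?_, ?_⟩
  · intro d hd
    rw [toTab, mem_image] at hd
    obtain ⟨e, he, rfl⟩ := hd
    obtain ⟨c1, c2, c3, c4, c5⟩ := hb e he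
    simp only [lowCol]
    refine ⟨by omega, by omega, by omega, by omega⟩
  · intro i hi1 hi2
    rw [toTab, filter_row_image hlsnd]
    obtain ⟨c, hc⟩ := Finset.card_eq_one.mp (hrow i hi1 hi2)
    rw [hc, image_singleton, card_singleton]
  · intro j hj1 hj2
    rw [toTab, filter_image]
    have e1 : H.filter (fun a => (lowCol n a).1 = j)
        = H.filter (fun d => d.1 = j ∨ d.1 = 2 * n + 1 - j) := by
      apply filter_congr
      intro d hd
      obtain ⟨c1, c2, c3, c4, c5⟩ := hb d hd
      simp only [lowCol]
      constructor <;> intro h <;> omega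
    rw [e1, card_image_of_injOn (hinjH.mono (Finset.coe_subset.2 (filter_subset _ _)))]
    rw [filter_or, card_union_of_disjoint]
    · exact hpair j hj1 hj2
    · rw [Finset.disjoint_left]
      intro a ha ha'
      rw [mem_filter] at ha ha'
      omega
  · intro d hd
    rw [toTab, mem_image] at hd
    obtain ⟨e, he, rfl⟩ := hd
    obtain ⟨c1, c2, c3, c4, c5⟩ := hb e he
    simp only [lowCol]
    omega

/-- the lift of a tableau given a chosen set `A` of free dots to put in high columns -/
def liftF (n : ℕ) (A : Finset (ℕ × ℕ)) (d : ℕ × ℕ) : ℕ × ℕ :=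
  if d ∈ A then (2 * n + 1 - d.1, d.2) else d

lemma liftF_snd (n : ℕ) (A : Finset (ℕ × ℕ)) (d : ℕ × ℕ) : (liftF n A d).2 = d.2 := by
  simp only [liftF]
  split <;> rfl

lemma fiber_card {n : ℕ} {T : Finset (ℕ × ℕ)} (hT : IsTab n T) :
    ((hFin n).filter (fun H => toTab n H = T)).card = 2 ^ fr n T := by
  obtain ⟨tb, trow, tcol, tdia⟩ := hT
  have hTuniq : ∀ a ∈ T, ∀ b ∈ T, a.2 = b.2 → a = b := by
    intro a ha b hb h
    obtain ⟨c1, c2, c3, c4⟩ := tb a ha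
    exact filter_one_unique (trow a.2 c3 c4) ha rfl hb h.symm
  have hTinj : ∀ A : Finset (ℕ × ℕ), Set.InjOn (liftF n A) T := fun A =>
    injOn_of_row (liftF_snd n A) (fun d hd => ⟨(tb d hd).2.2.1, (tb d hd).2.2.2⟩) trow
  have hTcard : T.card = 2 * n :=
    card_of_rows (fun d hd => ⟨(tb d hd).2.2.1, (tb d hd).2.2.2⟩) trow
  have hψcard : ∀ A : Finset (ℕ × ℕ), (T.image (liftF n A)).card = 2 * n := fun A => by
    rw [card_image_of_injOn (hTinj A), hTcard]
  -- P1 : half property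
  have P1 : ∀ A ∈ (T.filter (fun d => 2 * n + 1 ≤ d.1 + d.2)).powerset,
      IsHalf n (T.image (liftF n A)) := by
    intro A hA
    rw [mem_powerset] at hA
    have hAT : ∀ d ∈ A, d ∈ T ∧ 2 * n + 1 ≤ d.1 + d.2 := by
      intro d hd
      have := hA hd
      rw [mem_filter] at this
      exact this
    refine ⟨?_, ?_, ?_⟩
    · intro d hd
      rw [mem_image] at hd
      obtain ⟨e, he, rfl⟩ := hd
      obtain ⟨c1, c2, c3, c4⟩ := tb e he
      have c5 := tdia e he
      by_cases heA : e ∈ A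
      · have := (hAT e heA).2
        simp only [liftF, if_pos heA]
        refine ⟨by omega, by omega, by omega, by omega, by omega⟩
      · simp only [liftF, if_neg heA]
        refine ⟨by omega, by omega, by omega, by omega, by omega⟩
    · intro i hi1 hi2
      rw [filter_row_image (liftF_snd n A)]
      obtain ⟨c, hc⟩ := Finset.card_eq_one.mp (trow i hi1 hi2)
      rw [hc, image_singleton, card_singleton]
    · intro j hj1 hj2
      have eL : T.filter (fun d => (liftF n A d).1 = j)
          = (T.filter (fun d => d.1 = j)).filter (fun d => d ∉ A) := by
        rw [filter_filter]
        apply filter_congr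
        intro d hd
        obtain ⟨c1, c2, c3, c4⟩ := tb d hd
        by_cases hdA : d ∈ A
        · have := (hAT d hdA).2
          simp only [liftF, if_pos hdA]
          constructor
          · intro h; exfalso; omega
          · rintro ⟨h1, h2⟩; exact absurd hdA h2
        · simp only [liftF, if_neg hdA]
          constructor
          · intro h; exact ⟨h, hdA⟩
          · rintro ⟨h1, _⟩; exact h1
      have eR : T.filter (fun d => (liftF n A d).1 = 2 * n + 1 - j)
          = (T.filter (fun d => d.1 = j)).filter (fun d => ¬ d ∉ A) := by
        rw [filter_filter]
        apply filter_congr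
        intro d hd
        obtain ⟨c1, c2, c3, c4⟩ := tb d hd
        by_cases hdA : d ∈ A
        · have := (hAT d hdA).2
          simp only [liftF, if_pos hdA]
          constructor
          · intro h; exact ⟨by omega, fun hc => hc hdA⟩
          · rintro ⟨h1, _⟩; omega
        · simp only [liftF, if_neg hdA]
          constructor
          · intro h; exfalso; omega
          · rintro ⟨h1, h2⟩; exact absurd hdA h2
      rw [filter_image, filter_image, eL, eR,
        card_image_of_injOn ((hTinj A).mono (Finset.coe_subset.2
          ((filter_subset _ _).trans (filter_subset _ _)))),
        card_image_of_injOn ((hTinj A).mono (Finset.coe_subset.2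
          ((filter_subset _ _).trans (filter_subset _ _)))),
        card_filter_add_card_filter_not]
      exact tcol j hj1 hj2
  -- P2 : projects back to T
  have P2 : ∀ A ∈ (T.filter (fun d => 2 * n + 1 ≤ d.1 + d.2)).powerset,
      toTab n (T.image (liftF n A)) = T := by
    intro A hA
    rw [mem_powerset] at hA
    rw [toTab, image_image]
    have : ∀ d ∈ T, (lowCol n ∘ liftF n A) d = d := by
      intro d hd
      obtain ⟨c1, c2, c3, c4⟩ := tb d hd
      by_cases hdA : d ∈ A
      · have := hA hdA
        rw [mem_filter] at this
        simp only [Function.comp, liftF, if_pos hdA, lowCol, Prod.ext_iff]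
        constructor
        · omega
        · trivial
      · simp only [Function.comp, liftF, if_neg hdA, lowCol, Prod.ext_iff]
        constructor
        · omega
        · trivial
    rw [Finset.image_congr (fun d hd => this d hd), Finset.image_id']
  -- P3 : recovery of A, hence injectivity
  have P3 : ∀ A ∈ (T.filter (fun d => 2 * n + 1 ≤ d.1 + d.2)).powerset,
      ((T.image (liftF n A)).filter (fun h => n + 1 ≤ h.1)).image (lowCol n) = A := by
    intro A hA
    rw [mem_powerset] at hA
    have hAT : A ⊆ T := hA.trans (filter_subset _ _)
    have e1 : T.filter (fun d => n + 1 ≤ (liftF n A d).1) = A := by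
      have : T.filter (fun d => n + 1 ≤ (liftF n A d).1) = T.filter (fun d => d ∈ A) := by
        apply filter_congr
        intro d hd
        obtain ⟨c1, c2, c3, c4⟩ := tb d hd
        by_cases hdA : d ∈ A
        · have := hA hdA
          rw [mem_filter] at this
          simp only [liftF, if_pos hdA]
          constructor
          · intro _; exact hdA
          · intro _; omega
        · simp only [liftF, if_neg hdA]
          constructor
          · intro h; exfalso; omega
          · intro h; exact absurd h hdA
      rw [this, Finset.filter_mem_eq_inter, Finset.inter_eq_right.2 hAT]
    rw [filter_image, e1, image_image]
    have : ∀ d ∈ A, (lowCol n ∘ liftF n A) d = d := by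
      intro d hd
      have hdT := hAT hd
      have hdF := hA hd
      rw [mem_filter] at hdF
      obtain ⟨c1, c2, c3, c4⟩ := tb d hdT
      simp only [Function.comp, liftF, if_pos hd, lowCol, Prod.ext_iff]
      constructor
      · omega
      · trivial
    rw [Finset.image_congr (fun d hd => this d hd), Finset.image_id']
  -- assemble
  have frFD : 2 ^ fr n T = (T.filter (fun d => 2 * n + 1 ≤ d.1 + d.2)).powerset.card := by
    rw [card_powerset, fr]
  rw [frFD]
  symm
  apply card_nbij (i := fun A => T.image (liftF n A))
  · intro A hA
    rw [Finset.mem_coe, mem_filter]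
    exact ⟨mem_hFin.2 (P1 A hA), P2 A hA⟩
  · intro A1 hA1 A2 hA2 h
    simp only [Finset.mem_coe] at hA1 hA2
    simp only at h
    rw [← P3 A1 hA1, ← P3 A2 hA2, h]
  · -- surjectivity
    intro H hH
    simp only [Finset.mem_coe, mem_filter] at hH
    obtain ⟨hHmem, hHtab⟩ := hH
    obtain ⟨hb, hrow, hpair⟩ := mem_hFin.1 hHmem
    set A : Finset (ℕ × ℕ) := (H.filter (fun h => n + 1 ≤ h.1)).image (lowCol n) with hAdef
    have hApow : A ∈ (T.filter (fun d => 2 * n + 1 ≤ d.1 + d.2)).powerset := by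
      rw [mem_powerset]
      intro d hd
      rw [hAdef, mem_image] at hd
      obtain ⟨e, he, rfl⟩ := hd
      rw [mem_filter] at he
      obtain ⟨heH, heHi⟩ := he
      obtain ⟨c1, c2, c3, c4, c5⟩ := hb e heH
      rw [mem_filter]
      constructor
      · rw [← hHtab, toTab, mem_image]
        exact ⟨e, heH, rfl⟩
      · simp only [lowCol]
        omega
    refine ⟨A, by rwa [Finset.mem_coe], ?_⟩
    -- H = ψ A
    have hsub : H ⊆ T.image (liftF n A) := by
      intro h hh
      obtain ⟨c1, c2, c3, c4, c5⟩ := hb h hh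
      by_cases hc : h.1 ≤ n
      · have hlc : lowCol n h = h := by
          simp only [lowCol, Prod.ext_iff]
          exact ⟨by omega, trivial⟩
        have hhT : h ∈ T := by
          rw [← hHtab, toTab, mem_image]
          exact ⟨h, hh, hlc⟩
        have hhA : h ∉ A := by
          intro hcon
          rw [hAdef, mem_image] at hcon
          obtain ⟨e, he, hee⟩ := hcon
          rw [mem_filter] at he
          have he2 : e.2 = h.2 := by rw [← congrArg Prod.snd hee]; rfl
          have heq : e = h := filter_one_unique (hrow h.2 c3 c4) he.1 he2 hh rfl
          have hee1 : n + 1 ≤ e.1 := he.2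
          rw [heq] at hee1
          omega
        rw [mem_image]
        refine ⟨h, hhT, ?_⟩
        simp only [liftF, if_neg hhA]
      · have hlc : lowCol n h = (2 * n + 1 - h.1, h.2) := by
          simp only [lowCol, Prod.ext_iff]
          exact ⟨by omega, trivial⟩
        have hdA : (2 * n + 1 - h.1, h.2) ∈ A := by
          rw [hAdef, mem_image]
          refine ⟨h, ?_, hlc⟩
          rw [mem_filter]
          exact ⟨hh, by omega⟩
        have hdT : (2 * n + 1 - h.1, h.2) ∈ T := by
          rw [← hHtab, toTab, mem_image]
          exact ⟨h, hh, hlc⟩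
        rw [mem_image]
        refine ⟨(2 * n + 1 - h.1, h.2), hdT, ?_⟩
        simp only [liftF, if_pos hdA, Prod.ext_iff]
        exact ⟨by omega, trivial⟩
    have hHcard : H.card = 2 * n :=
      card_of_rows (fun d hd => ⟨(hb d hd).2.2.1, (hb d hd).2.2.2.1⟩) hrow
    symm
    apply Finset.eq_of_subset_of_card_le hsub
    rw [hψcard, hHcard]

lemma card_hFin_eq_sum (n : ℕ) :
    (hFin n).card = ∑ T ∈ tFin n, 2 ^ fr n T := by
  rw [Finset.card_eq_sum_card_fiberwise (f := toTab n) (t := tFin n)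
    (fun H hH => mem_tFin.2 (tab_of_half (mem_hFin.1 hH)))]
  apply Finset.sum_congr rfl
  intro T hT
  exact fiber_card (mem_tFin.1 hT)

end SpDCAux

/-- For every `n ≥ 1`, `#SpDC_{2n} = Σ_{T ∈ Tab_n} 2^{fr(T)}`. -/
theorem spdc_card_eq_sum_tab (n : ℕ) (hn : 1 ≤ n) :
    (SpDC n).ncard = ∑ᶠ T ∈ Tab n, 2 ^ fr n T := by
  have h1 : SpDC n = ↑(SpDCAux.sFin n) := by
    ext S
    simp only [SpDC, Set.mem_setOf_eq, Finset.mem_coe, SpDCAux.mem_sFin]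
  have h2 : Tab n = ↑(SpDCAux.tFin n) := by
    ext T
    simp only [Tab, Set.mem_setOf_eq, Finset.mem_coe, SpDCAux.mem_tFin]
  rw [h1, Set.ncard_coe_finset, h2, finsum_mem_coe_finset,
    SpDCAux.card_sFin_eq_hFin n, SpDCAux.card_hFin_eq_sum n]
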